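/- Let T be a tree with a vertex v having leaf neighbors l_1,...,l_k (k ≥ 2), and let T' = T − {v, l_1, ..., l_k}. A vertex u of T' is contained in some minimal zero forcing set of T' if and only if u is contained in some minimal zero forcing set of T. -/

import Mathlib

namespace ZF

variable {V : Type*}

/-- The set of vertices forced blue starting from `S`, under the standard color change
rule: a blue vertex with exactly one white neighbor forces that neighbor blue. -/
inductive Forced (G : SimpleGraph V) (S : Set V) : V → Prop
  | init {v : V} : v ∈ S → Forced G S v
  | force {u w : V} : Forced G S u → G.Adj u w →
      (∀ x, G.Adj u x → x ≠ w → Forced G S x) → Forced G S w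

/-- `S` is a zero forcing set of `G`. -/
def IsZFS (G : SimpleGraph V) (S : Set V) : Prop := ∀ v, Forced G S v

/-- `S` is a minimal zero forcing set of `G`. -/
def IsMinimalZFS (G : SimpleGraph V) (S : Set V) : Prop :=
  IsZFS G S ∧ ∀ S' ⊂ S, ¬ IsZFS G S'

/-- The zero forcing number of `G`. -/
noncomputable def zfNum (G : SimpleGraph V) : ℕ :=
  sInf {n | ∃ S : Set V, IsZFS G S ∧ S.ncard = n}

/-- A graph is well-forced if every minimal zero forcing set is minimum. -/
def WellForced (G : SimpleGraph V) : Prop :=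
  ∀ S, IsMinimalZFS G S → S.ncard = zfNum G

/-- Degree of a vertex (as the `ncard` of its neighbor set). -/
noncomputable def deg (G : SimpleGraph V) (v : V) : ℕ := (G.neighborSet v).ncard

end ZF

open ZF SimpleGraph


section Generic
variable {V : Type*} {G : SimpleGraph V}

lemma forced_mono {S S' : Set V} (h : S ⊆ S') {x : V} (hx : Forced G S x) :
    Forced G S' x := by
  induction hx with
  | init h' => exact .init (h h')
  | force hu hadj hside ihu ihside => exact .force ihu hadj ihside

lemma forced_trans {S S' : Set V} (h : ∀ s ∈ S, Forced G S' s) {x : V}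
    (hx : Forced G S x) : Forced G S' x := by
  induction hx with
  | init h' => exact h _ h'
  | force hu hadj hside ihu ihside => exact .force ihu hadj ihside

lemma zfs_mono {S S' : Set V} (h : S ⊆ S') (hS : IsZFS G S) : IsZFS G S' :=
  fun x => forced_mono h (hS x)

lemma exists_minimal_zfs [Finite V] {B : Set V} {u : V} (hB : IsZFS G B)
    (hu : u ∈ B) (hnot : ¬ IsZFS G (B \ {u})) :
    ∃ B', IsMinimalZFS G B' ∧ u ∈ B' := by
  obtain ⟨B', hB'mem, hB'min⟩ := Set.Finite.exists_minimalFor id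
    {C | C ⊆ B ∧ IsZFS G C} (Set.toFinite _) ⟨B, subset_rfl, hB⟩
  refine ⟨B', ⟨hB'mem.2, ?_⟩, ?_⟩
  · intro C hC hCz
    have := @hB'min C ⟨hC.subset.trans hB'mem.1, hCz⟩ hC.subset
    exact hC.ne (le_antisymm hC.subset this)
  · by_contra hu'
    exact hnot (zfs_mono (fun x hx => ⟨hB'mem.1 hx, fun hxx => hu' (hxx ▸ hx)⟩) hB'mem.2)

lemma forced_of_not_reachable {Y : Set V} {c x : V}
    (h : Forced G (Y ∪ {c}) x) (hr : ¬ G.Reachable c x) : Forced G Y x := by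
  induction h with
  | init h' =>
    rcases h' with h' | h'
    · exact .init h'
    · subst h'; exact absurd (Reachable.refl _) hr
  | force hu hadj hside ihu ihside =>
    refine .force (ihu fun r => hr (r.trans hadj.reachable)) hadj ?_
    intro z hz hne
    exact ihside z hz hne fun r => hr (r.trans (hz.symm.reachable.trans hadj.reachable))

end Generic

section Setting
variable {V : Type*} {T : SimpleGraph V} {v : V} {L : Set V}

lemma nbhd_leaf (hL : L = {u | T.Adj v u ∧ deg T u = 1}) {l : V} (hl : l ∈ L) :
    T.neighborSet l = {v} := by
  rw [hL] at hl
  obtain ⟨hadj, hdeg⟩ := hl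
  obtain ⟨a, ha⟩ := Set.ncard_eq_one.mp hdeg
  have hv : v ∈ T.neighborSet l := hadj.symm
  rw [ha] at hv ⊢
  rw [Set.mem_singleton_iff.mp hv]

lemma eq_v_of_adj_leaf (hL : L = {u | T.Adj v u ∧ deg T u = 1}) {l x : V}
    (hl : l ∈ L) (h : T.Adj x l) : x = v := by
  have : x ∈ T.neighborSet l := h.symm
  rwa [nbhd_leaf hL hl, Set.mem_singleton_iff] at this

lemma v_not_mem_L (hL : L = {u | T.Adj v u ∧ deg T u = 1}) : v ∉ L := by
  rw [hL]; rintro ⟨h, -⟩; exact T.irrefl h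

lemma adj_v_of_mem_L (hL : L = {u | T.Adj v u ∧ deg T u = 1}) {l : V} (hl : l ∈ L) :
    T.Adj v l := by rw [hL] at hl; exact hl.1

lemma not_mem_W {x : V} (h : x ∉ (({v} ∪ L)ᶜ : Set V)) : x = v ∨ x ∈ L := by
  rcases (not_not.mp fun h' => h fun hm => h' hm) with h | h
  · exact Or.inl h
  · exact Or.inr h

lemma leaf_not_mem_W {l : V} (hl : l ∈ L) : l ∉ (({v} ∪ L)ᶜ : Set V) :=
  fun h => h (Or.inr hl)

lemma v_not_mem_W : v ∉ (({v} ∪ L)ᶜ : Set V) := fun h => h (Or.inl rfl)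

lemma adj_of_W (hL : L = {u | T.Adj v u ∧ deg T u = 1}) {x y : V}
    (hx : x ∈ (({v} ∪ L)ᶜ : Set V)) (h : T.Adj x y) :
    y = v ∨ y ∈ (({v} ∪ L)ᶜ : Set V) := by
  by_contra hc
  push_neg at hc
  rcases not_mem_W hc.2 with rfl | hyL
  · exact hc.1 rfl
  · exact (fun hm => hx (Or.inl hm)) (eq_v_of_adj_leaf hL hyL h) |>.elim

lemma two_white (hL : L = {u | T.Adj v u ∧ deg T u = 1}) {S : Set V} {l1 l2 : V}
    (h1 : l1 ∈ L) (h2 : l2 ∈ L) (hne : l1 ≠ l2) (hn1 : l1 ∉ S) (hn2 : l2 ∉ S)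
    (hZ : IsZFS T S) : False := by
  have key : ∀ x, Forced T S x → x ≠ l1 ∧ x ≠ l2 := by
    intro x hx
    induction hx with
    | init h' => exact ⟨fun h => hn1 (h ▸ h'), fun h => hn2 (h ▸ h')⟩
    | force hu hadj hside ihu ihside =>
      constructor
      · rintro rfl
        have hv' := eq_v_of_adj_leaf hL h1 hadj
        subst hv'
        exact (ihside l2 (adj_v_of_mem_L hL h2) hne.symm).2 rfl
      · rintro rfl
        have hv' := eq_v_of_adj_leaf hL h2 hadj
        subst hv'
        exact (ihside l1 (adj_v_of_mem_L hL h1) hne).1 rfl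
  exact (key l1 (hZ l1)).1 rfl


lemma project2 (hL : L = {u | T.Adj v u ∧ deg T u = 1}) {B : Set V}
    {A' : Set ↥(({v} ∪ L)ᶜ : Set V)}
    (hBW : ∀ x (hx : x ∈ (({v} ∪ L)ᶜ : Set V)), x ∈ B →
      Forced (T.induce (({v} ∪ L)ᶜ : Set V)) A' ⟨x, hx⟩)
    (hv : ∀ x (hx : x ∈ (({v} ∪ L)ᶜ : Set V)), T.Adj v x →
      (∀ y (hy : y ∈ (({v} ∪ L)ᶜ : Set V)), T.Adj v y → y ≠ x →
        Forced (T.induce (({v} ∪ L)ᶜ : Set V)) A' ⟨y, hy⟩) →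
      Forced (T.induce (({v} ∪ L)ᶜ : Set V)) A' ⟨x, hx⟩) :
    ∀ x, Forced T B x → ∀ hx : x ∈ (({v} ∪ L)ᶜ : Set V),
      Forced (T.induce (({v} ∪ L)ᶜ : Set V)) A' ⟨x, hx⟩ := by
  intro x hx
  induction hx with
  | init h' => exact fun hxW => hBW _ hxW h'
  | @force y x hu hadj hside ihu ihside =>
    intro hxW
    by_cases hyW : y ∈ (({v} ∪ L)ᶜ : Set V)
    · refine .force (u := ⟨y, hyW⟩) (ihu hyW) (by exact hadj) ?_
      intro z hz hne
      exact ihside ↑z (by exact hz) (fun h => hne (Subtype.ext h)) z.2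
    · rcases not_mem_W hyW with rfl | hyL
      · exact hv x hxW hadj (fun y' hy' hady' hney' => ihside y' hady' hney' hy')
      · exfalso
        have hxv : x ∈ T.neighborSet y := hadj
        rw [nbhd_leaf hL hyL] at hxv
        exact v_not_mem_W (hxv ▸ hxW)

lemma project1 (hL : L = {u | T.Adj v u ∧ deg T u = 1}) {B : Set V} {l0 : V}
    (hl0 : l0 ∈ L) (hl0B : l0 ∉ B) :
    ∀ x, Forced T B x →
      (∀ hx : x ∈ (({v} ∪ L)ᶜ : Set V),
        Forced (T.induce (({v} ∪ L)ᶜ : Set V)) (Subtype.val ⁻¹' B) ⟨x, hx⟩) ∧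
      (x = l0 → ∀ y (hy : y ∈ (({v} ∪ L)ᶜ : Set V)), T.Adj v y →
        Forced (T.induce (({v} ∪ L)ᶜ : Set V)) (Subtype.val ⁻¹' B) ⟨y, hy⟩) := by
  intro x hx
  induction hx with
  | init h' =>
    exact ⟨fun hxW => .init h', fun hxl => absurd (hxl ▸ h') hl0B⟩
  | @force y x hu hadj hside ihu ihside =>
    constructor
    · intro hxW
      by_cases hyW : y ∈ (({v} ∪ L)ᶜ : Set V)
      · refine .force (u := ⟨y, hyW⟩) (ihu.1 hyW) (by exact hadj) ?_
        intro z hz hne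
        exact (ihside ↑z (by exact hz) (fun h => hne (Subtype.ext h))).1 z.2
      · rcases not_mem_W hyW with rfl | hyL
        · have hl0x : l0 ≠ x := fun h => leaf_not_mem_W hl0 (h ▸ hxW)
          exact (ihside l0 (adj_v_of_mem_L hL hl0) hl0x).2 rfl x hxW hadj
        · exfalso
          have hxv : x ∈ T.neighborSet y := hadj
          rw [nbhd_leaf hL hyL] at hxv
          exact v_not_mem_W (hxv ▸ hxW)
    · intro hxl y' hy' hady'
      have hxL : x ∈ L := by rw [hxl]; exact hl0
      have hyv : y = v := eq_v_of_adj_leaf hL hxL hadj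
      rw [hyv] at hadj hside ihside
      have hne : y' ≠ x := fun h => leaf_not_mem_W hxL (h ▸ hy')
      exact (ihside y' hady' hne).1 hy'

lemma lift (hL : L = {u | T.Adj v u ∧ deg T u = 1}) {B : Set V}
    {X : Set ↥(({v} ∪ L)ᶜ : Set V)} (hv : Forced T B v)
    (hX : ∀ z ∈ X, Forced T B ↑z) :
    ∀ z, Forced (T.induce (({v} ∪ L)ᶜ : Set V)) X z → Forced T B ↑z := by
  intro z hz
  induction hz with
  | init h' => exact hX _ h'
  | @force a z ha hadj hside iha ihside =>
    refine .force iha (by exact hadj) ?_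
    intro x' hx' hne
    rcases adj_of_W hL a.2 hx' with rfl | hx'W
    · exact hv
    · exact ihside ⟨x', hx'W⟩ (by exact hx') (fun h => hne (congrArg Subtype.val h))

lemma leaf_forces_v (hL : L = {u | T.Adj v u ∧ deg T u = 1}) {B : Set V} {l : V}
    (hl : l ∈ L) (hlB : l ∈ B) : Forced T B v := by
  refine .force (.init hlB) (adj_v_of_mem_L hL hl).symm ?_
  intro x hx hne
  have hxv : x ∈ T.neighborSet l := hx
  rw [nbhd_leaf hL hl] at hxv
  exact absurd hxv hne

lemma claim1fwd (hL : L = {u | T.Adj v u ∧ deg T u = 1}) (hL2 : 2 ≤ L.ncard)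
    {B : Set V} {l0 : V} (hl0 : l0 ∈ L)
    (hleaves : ∀ l ∈ L, l ≠ l0 → l ∈ B)
    (hW : IsZFS (T.induce (({v} ∪ L)ᶜ : Set V)) (Subtype.val ⁻¹' B)) : IsZFS T B := by
  obtain ⟨l1, hl1L, hl1ne⟩ := Set.exists_ne_of_one_lt_ncard (lt_of_lt_of_le one_lt_two hL2) l0
  have hv : Forced T B v := leaf_forces_v hL hl1L (hleaves _ hl1L hl1ne)
  have hWall : ∀ z : ↥(({v} ∪ L)ᶜ : Set V), Forced T B ↑z :=
    fun z => lift hL hv (fun z' hz' => .init hz') z (hW z)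
  have hl0F : Forced T B l0 := by
    refine .force hv (adj_v_of_mem_L hL hl0) ?_
    intro x hx hne
    by_cases hxW : x ∈ (({v} ∪ L)ᶜ : Set V)
    · exact hWall ⟨x, hxW⟩
    · rcases not_mem_W hxW with rfl | hxL
      · exact absurd hx (T.irrefl)
      · exact .init (hleaves _ hxL hne)
  intro x
  by_cases hxW : x ∈ (({v} ∪ L)ᶜ : Set V)
  · exact hWall ⟨x, hxW⟩
  · rcases not_mem_W hxW with rfl | hxL
    · exact hv
    · by_cases hxl0 : x = l0
      · exact hxl0 ▸ hl0F
      · exact .init (hleaves _ hxL hxl0)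

lemma claim4 (hL : L = {u | T.Adj v u ∧ deg T u = 1}) (hL2 : 2 ≤ L.ncard)
    {B : Set V} (hLB : L ⊆ B) {c : V} (hc : c ∈ (({v} ∪ L)ᶜ : Set V))
    (hcadj : T.Adj v c)
    (hN : ∀ y (hy : y ∈ (({v} ∪ L)ᶜ : Set V)), T.Adj v y → y ≠ c →
      Forced (T.induce (({v} ∪ L)ᶜ : Set V)) (Subtype.val ⁻¹' B) ⟨y, hy⟩)
    (hZ : IsZFS (T.induce (({v} ∪ L)ᶜ : Set V)) ((Subtype.val ⁻¹' B) ∪ {⟨c, hc⟩})) :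
    IsZFS T B := by
  obtain ⟨l1, hl1L⟩ := Set.nonempty_of_ncard_ne_zero (s := L) (by omega)
  have hv : Forced T B v := leaf_forces_v hL hl1L (hLB hl1L)
  have hcF : Forced T B c := by
    refine .force hv hcadj ?_
    intro x hx hne
    by_cases hxW : x ∈ (({v} ∪ L)ᶜ : Set V)
    · exact lift hL hv (fun z' hz' => .init hz') _ (hN x hxW hx hne)
    · rcases not_mem_W hxW with rfl | hxL
      · exact absurd hx (T.irrefl)
      · exact .init (hLB hxL)
  have hWall : ∀ z : ↥(({v} ∪ L)ᶜ : Set V), Forced T B ↑z := by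
    intro z
    refine lift hL hv ?_ z (hZ z)
    rintro z' (hz' | hz')
    · exact .init hz'
    · rw [show z' = ⟨c, hc⟩ from hz']; exact hcF
  intro x
  by_cases hxW : x ∈ (({v} ∪ L)ᶜ : Set V)
  · exact hWall ⟨x, hxW⟩
  · rcases not_mem_W hxW with rfl | hxL
    · exact hv
    · exact .init (hLB hxL)

lemma no_reach (hT : T.IsTree) {c d : V} (hcd : c ≠ d) (hc : T.Adj v c)
    (hd : T.Adj v d) (hcW : c ∈ (({v} ∪ L)ᶜ : Set V)) (hdW : d ∈ (({v} ∪ L)ᶜ : Set V)) :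
    ¬ (T.induce (({v} ∪ L)ᶜ : Set V)).Reachable ⟨c, hcW⟩ ⟨d, hdW⟩ := by
  classical
  rintro ⟨w⟩
  let w' : T.Walk c d := w.map (Embedding.induce (({v} ∪ L)ᶜ : Set V)).toHom
  have hvsup : v ∉ w'.support := by
    intro hmem
    replace hmem : v ∈ (w.map (Embedding.induce (({v} ∪ L)ᶜ : Set V)).toHom).support := hmem
    rw [Walk.support_map] at hmem
    obtain ⟨z, hz, hzv⟩ := List.mem_map.mp hmem
    exact v_not_mem_W ((show (z : V) = v from hzv) ▸ z.2)
  have hvp : v ∉ w'.toPath.1.support := fun h => hvsup (Walk.support_toPath_subset w' h)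
  let q : T.Walk c d := .cons hc.symm (.cons hd .nil)
  have hq : q.IsPath := by
    classical
    simp [q, Walk.isPath_def, hcd, hc.ne', hd.ne]
  have huniq := hT.IsAcyclic.path_unique w'.toPath ⟨q, hq⟩
  apply hvp
  rw [huniq]
  simp [q]

lemma donation_unique (hL : L = {u | T.Adj v u ∧ deg T u = 1}) {S : Set V}
    (hZ : IsZFS T S) {c c' : V} (hc : c ∈ (({v} ∪ L)ᶜ : Set V))
    (hc' : c' ∈ (({v} ∪ L)ᶜ : Set V)) (hadjc : T.Adj v c) (hadjc' : T.Adj v c')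
    (hne : c ≠ c')
    (hnf : ¬ Forced (T.induce (({v} ∪ L)ᶜ : Set V)) (Subtype.val ⁻¹' S) ⟨c, hc⟩)
    (hnf' : ¬ Forced (T.induce (({v} ∪ L)ᶜ : Set V)) (Subtype.val ⁻¹' S) ⟨c', hc'⟩) :
    False := by
  apply hnf
  refine project2 hL (fun x hx hxB => .init hxB) ?_ c (hZ c) hc
  intro x hx hadjx hside
  by_cases hxc : x = c
  · exfalso
    refine hnf' (hside c' hc' hadjc' fun h => hne ?_)
    rw [hxc] at h; exact h.symm
  · exact absurd (hside c hc hadjc fun h => hxc h.symm) hnf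

end Setting


/-- Let `T` be a tree with a vertex `v` having at least two leaf
neighbors `L`, and let `T'` be the tree obtained by deleting `v` and its leaf
neighbors.  A vertex `u` of `T'` is contained in some minimal zero forcing set of `T'`
if and only if `u` is contained in some minimal zero forcing set of `T`. -/
theorem star_removal_minimal_membership {V : Type*} [Fintype V] (T : SimpleGraph V)
    (hT : T.IsTree) (v : V)
    (L : Set V) (hL : L = {u | T.Adj v u ∧ deg T u = 1}) (hL2 : 2 ≤ L.ncard)
    (u : ↥(({v} ∪ L)ᶜ : Set V)) :
    (∃ S' : Set ↥(({v} ∪ L)ᶜ : Set V),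
        IsMinimalZFS (T.induce (({v} ∪ L)ᶜ : Set V)) S' ∧ u ∈ S') ↔
      (∃ S : Set V, IsMinimalZFS T S ∧ (u : V) ∈ S) := by
  classical
  obtain ⟨l0, hl0⟩ := Set.nonempty_of_ncard_ne_zero (s := L) (by omega)
  constructor
  · rintro ⟨S', ⟨hS'z, hS'min⟩, huS'⟩
    set B : Set V := (Subtype.val '' S') ∪ (L \ {l0}) with hB
    have h2 : (Subtype.val ⁻¹' (L \ {l0}) : Set ↥(({v} ∪ L)ᶜ : Set V)) = ∅ := by
      ext z
      simp only [Set.mem_preimage, Set.mem_diff, Set.mem_empty_iff_false, iff_false]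
      exact fun h => leaf_not_mem_W h.1 z.2
    have hpre : Subtype.val ⁻¹' B = S' := by
      rw [hB, Set.preimage_union, Set.preimage_image_eq S' Subtype.val_injective, h2,
        Set.union_empty]
    have hl0B : l0 ∉ B := by
      rintro (⟨z, hz, rfl⟩ | ⟨-, h⟩)
      · exact leaf_not_mem_W hl0 z.2
      · exact h rfl
    have hZB : IsZFS T B :=
      claim1fwd hL hL2 hl0 (fun l hlm hln => Or.inr ⟨hlm, hln⟩)
        (by rw [hpre]; exact hS'z)
    have huB : (u : V) ∈ B := Or.inl ⟨u, huS', rfl⟩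
    have hnot : ¬ IsZFS T (B \ {(u : V)}) := by
      intro hz
      have hl0B' : l0 ∉ B \ {(u : V)} := fun h => hl0B h.1
      have hproj : IsZFS (T.induce (({v} ∪ L)ᶜ : Set V))
          (Subtype.val ⁻¹' (B \ {(u : V)})) := fun z =>
        (project1 hL hl0 hl0B' (z : V) (hz (z : V))).1 z.2
      have hpre2 : Subtype.val ⁻¹' (B \ {(u : V)}) = S' \ {u} := by
        rw [Set.preimage_diff, hpre]
        congr 1
        ext z
        simp only [Set.mem_preimage, Set.mem_singleton_iff, Subtype.ext_iff]
      rw [hpre2] at hproj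
      exact hS'min (S' \ {u}) (Set.sdiff_singleton_ssubset.mpr huS') hproj
    exact exists_minimal_zfs hZB huB hnot
  · rintro ⟨S, ⟨hSz, hSmin⟩, huS⟩
    set A : Set ↥(({v} ∪ L)ᶜ : Set V) := Subtype.val ⁻¹' S with hA
    have huA : u ∈ A := huS
    have huW : (u : V) ∉ L := fun hLu => leaf_not_mem_W (v := v) hLu u.2
    have hAu : Subtype.val ⁻¹' (S \ {(u : V)}) = A \ {u} := by
      rw [Set.preimage_diff, hA]
      congr 1
      ext z
      simp only [Set.mem_preimage, Set.mem_singleton_iff, Subtype.ext_iff]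
    by_cases hLS : L ⊆ S
    · -- all leaves in S
      have hAnot : ¬ IsZFS (T.induce (({v} ∪ L)ᶜ : Set V)) A := by
        intro h
        apply hSmin (S \ {l0}) (Set.sdiff_singleton_ssubset.mpr (hLS hl0))
        refine claim1fwd hL hL2 hl0 (fun l hlm hln => ⟨hLS hlm, hln⟩) ?_
        have hps : Subtype.val ⁻¹' (S \ {l0}) = A := by
          rw [Set.preimage_diff, hA]
          have : (Subtype.val ⁻¹' ({l0} : Set V) : Set ↥(({v} ∪ L)ᶜ : Set V)) = ∅ := by
            ext z
            simp only [Set.mem_preimage, Set.mem_singleton_iff, Set.mem_empty_iff_false,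
              iff_false]
            exact fun hh => leaf_not_mem_W hl0 (hh ▸ z.2)
          rw [this, Set.diff_empty]
        rw [hps]; exact h
      have hexc : ∃ c, ∃ hc : c ∈ (({v} ∪ L)ᶜ : Set V), T.Adj v c ∧
          ¬ Forced (T.induce (({v} ∪ L)ᶜ : Set V)) A ⟨c, hc⟩ := by
        by_contra hcon
        apply hAnot
        intro z
        refine project2 hL (fun x hx hxB => .init hxB) ?_ (z : V) (hSz (z : V)) z.2
        intro x hx hadjx _
        by_contra hnf
        exact hcon ⟨x, hx, hadjx, hnf⟩
      obtain ⟨c, hc, hcadj, hcnf⟩ := hexc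
      have hN : ∀ y (hy : y ∈ (({v} ∪ L)ᶜ : Set V)), T.Adj v y → y ≠ c →
          Forced (T.induce (({v} ∪ L)ᶜ : Set V)) A ⟨y, hy⟩ := by
        intro y hy hadjy hnyc
        by_contra hnf
        exact donation_unique hL hSz hc hy hcadj hadjy (fun h => hnyc h.symm) hcnf hnf
      have hAZc : IsZFS (T.induce (({v} ∪ L)ᶜ : Set V)) (A ∪ {⟨c, hc⟩}) := by
        intro z
        refine project2 hL (fun x hx hxB => .init (Or.inl hxB)) ?_ (z : V) (hSz (z : V)) z.2
        intro x hx hadjx _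
        by_cases hxc : x = c
        · exact .init (Or.inr (by simp only [Set.mem_singleton_iff]; exact Subtype.ext hxc))
        · exact forced_mono Set.subset_union_left (hN x hx hadjx hxc)
      have hucne : u ≠ ⟨c, hc⟩ := by
        intro h
        exact hcnf (.init (h ▸ huA))
      have hnot2 : ¬ IsZFS (T.induce (({v} ∪ L)ᶜ : Set V)) ((A ∪ {⟨c, hc⟩}) \ {u}) := by
        intro hB'
        apply hSmin (S \ {(u : V)}) (Set.sdiff_singleton_ssubset.mpr huS)
        have hsetEq : (A ∪ {⟨c, hc⟩}) \ {u} = (A \ {u}) ∪ {⟨c, hc⟩} := by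
          rw [Set.union_diff_distrib]
          congr 1
          exact Set.diff_singleton_eq_self fun h => hucne h
        rw [hsetEq, ← hAu] at hB'
        refine claim4 hL hL2 ?_ hc hcadj ?_ hB'
        · intro l hlm
          exact ⟨hLS hlm, fun hh => huW ((Set.mem_singleton_iff.mp hh) ▸ hlm)⟩
        · intro y hy hadjy hnyc
          have hreach := no_reach (L := L) hT (fun h => hnyc h.symm) hcadj hadjy hc hy
          have hf := hB' ⟨y, hy⟩
          rw [hAu] at hf ⊢
          exact forced_of_not_reachable hf hreach
      exact exists_minimal_zfs hAZc (Or.inl huA) hnot2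
    · -- some leaf missing
      obtain ⟨l1, hl1L, hl1nS⟩ := Set.not_subset.mp hLS
      have hAZ : IsZFS (T.induce (({v} ∪ L)ᶜ : Set V)) A := fun z =>
        (project1 hL hl1L hl1nS (z : V) (hSz (z : V))).1 z.2
      have hleaves : ∀ l ∈ L, l ≠ l1 → l ∈ S := by
        intro l hlm hln
        by_contra hls
        exact two_white hL hlm hl1L hln hls hl1nS hSz
      have hnot : ¬ IsZFS (T.induce (({v} ∪ L)ᶜ : Set V)) (A \ {u}) := by
        intro h
        apply hSmin (S \ {(u : V)}) (Set.sdiff_singleton_ssubset.mpr huS)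
        refine claim1fwd hL hL2 hl1L
          (fun l hlm hln => ⟨hleaves l hlm hln, fun hh => huW ((Set.mem_singleton_iff.mp hh) ▸ hlm)⟩) ?_
        rw [hAu]; exact h
      exact exists_minimal_zfs hAZ huA hnot
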